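/- If f : Δ = [a,b]×[c,d] → ℝ is convex on the co-ordinates on Δ (with a < b, c < d), then f((a+b)/2, (c+d)/2) ≤ (1/((b-a)(d-c))) ∫_a^b ∫_c^d f(x,y) dy dx ≤ (f(a,c)+f(a,d)+f(b,c)+f(b,d))/4. -/

import Mathlib

open MeasureTheory Set

private lemma hh_mid {a b : ℝ} {g : ℝ → ℝ} (hg : ConvexOn ℝ (Icc a b) g)
    {x : ℝ} (hx : x ∈ Icc a b) : g ((a + b) / 2) ≤ (g x + g (a + b - x)) / 2 := by
  have hx' : a + b - x ∈ Icc a b := ⟨by linarith [hx.2], by linarith [hx.1]⟩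
  have := hg.2 hx hx' (by norm_num : (0:ℝ) ≤ 1/2) (by norm_num : (0:ℝ) ≤ 1/2) (by norm_num)
  simp only [smul_eq_mul] at this
  calc g ((a + b) / 2) = g ((1/2) * x + (1/2) * (a + b - x)) := by ring_nf
    _ ≤ 1/2 * g x + 1/2 * g (a + b - x) := this
    _ = (g x + g (a + b - x)) / 2 := by ring

private lemma integrableOn_of_convexOn {a b : ℝ} (hab : a < b) {g : ℝ → ℝ}
    (hg : ConvexOn ℝ (Icc a b) g) : IntegrableOn g (Icc a b) := by
  have hc : ContinuousOn g (Ioo a b) := by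
    have := hg.continuousOn_interior; rwa [interior_Icc] at this
  have hmeas : AEStronglyMeasurable g (volume.restrict (Icc a b)) := by
    rw [← Measure.restrict_congr_set Ioo_ae_eq_Icc]
    exact hc.aestronglyMeasurable measurableSet_Ioo
  set M := max (g a) (g b) with hM
  have hmem : ∀ x ∈ Icc a b, g x ≤ M := by
    intro x hx
    have : x ∈ segment ℝ a b := by rwa [segment_eq_Icc hab.le]
    exact hg.le_on_segment (left_mem_Icc.2 hab.le) (right_mem_Icc.2 hab.le) this
  have hlow : ∀ x ∈ Icc a b, 2 * g ((a+b)/2) - M ≤ g x := by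
    intro x hx
    have h1 := hh_mid hg hx
    have hx' : a + b - x ∈ Icc a b := ⟨by linarith [hx.2], by linarith [hx.1]⟩
    have h2 := hmem _ hx'
    linarith
  set C := max |M| |2 * g ((a+b)/2) - M| with hC
  have hbdd : ∀ᵐ x ∂(volume.restrict (Icc a b)), ‖g x‖ ≤ C := by
    filter_upwards [ae_restrict_mem measurableSet_Icc] with x hx
    rw [Real.norm_eq_abs, abs_le]
    constructor
    · have := hlow x hx
      have : -|2 * g ((a+b)/2) - M| ≤ g x := by
        have := neg_abs_le (2 * g ((a+b)/2) - M); linarith [hlow x hx]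
      have hCle : -C ≤ -|2 * g ((a+b)/2) - M| := by
        simp [hC]
      linarith
    · have := hmem x hx
      have : M ≤ |M| := le_abs_self M
      have : |M| ≤ C := le_max_left _ _
      linarith [hmem x hx, le_abs_self M]
  exact ⟨hmeas, HasFiniteIntegral.restrict_of_bounded (C := C)
    (by simp [Real.volume_Icc]) hbdd⟩

private lemma hh {a b : ℝ} (hab : a < b) {g : ℝ → ℝ} (hg : ConvexOn ℝ (Icc a b) g) :
    (b - a) * g ((a + b) / 2) ≤ ∫ x in a..b, g x ∧
      ∫ x in a..b, g x ≤ (b - a) * (g a + g b) / 2 := by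
  have hgi : IntegrableOn g (Icc a b) := integrableOn_of_convexOn hab hg
  have hgi' : IntervalIntegrable g volume a b := by
    rw [intervalIntegrable_iff_integrableOn_Icc_of_le hab.le]; exact hgi
  have hrefl : ConvexOn ℝ (Icc a b) (fun x => g (a + b - x)) := by
    have := hg.comp_affineMap (AffineMap.const ℝ ℝ (a+b) - AffineMap.id ℝ ℝ)
    refine this.subset ?_ (convex_Icc a b)
    intro x hx
    simp only [mem_preimage, AffineMap.coe_sub, AffineMap.coe_const, AffineMap.coe_id,
      Pi.sub_apply, Function.const_apply, id_eq]
    exact ⟨by linarith [hx.2], by linarith [hx.1]⟩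
  have hri : IntervalIntegrable (fun x => g (a + b - x)) volume a b := by
    rw [intervalIntegrable_iff_integrableOn_Icc_of_le hab.le]
    exact integrableOn_of_convexOn hab hrefl
  have hrefl_int : (∫ x in a..b, g (a + b - x)) = ∫ x in a..b, g x := by
    have := intervalIntegral.integral_comp_sub_left (a := a) (b := b) g (a + b)
    simpa using this
  constructor
  · have h1 : (∫ x in a..b, g ((a+b)/2)) ≤ ∫ x in a..b, (g x + g (a + b - x)) / 2 := by
      apply intervalIntegral.integral_mono_on hab.le (by simp) ((hgi'.add hri).div_const 2)
      intro x hx; exact hh_mid hg hx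
    rw [intervalIntegral.integral_const] at h1
    have h2 : (∫ x in a..b, (g x + g (a + b - x)) / 2)
        = ((∫ x in a..b, g x) + ∫ x in a..b, g (a + b - x)) / 2 := by
      rw [← intervalIntegral.integral_add hgi' hri]
      exact intervalIntegral.integral_div 2 _
    rw [h2, hrefl_int] at h1
    simpa [smul_eq_mul] using h1.trans_eq (by ring)
  · have h1 : (∫ x in a..b, g x) ≤ ∫ x in a..b, ((b - x) * g a + (x - a) * g b) / (b - a) := by
      apply intervalIntegral.integral_mono_on hab.le hgi'
      · apply IntervalIntegrable.div_const
        exact (((intervalIntegrable_const).sub intervalIntegral.intervalIntegrable_id).mul_const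
          _).add ((intervalIntegral.intervalIntegrable_id.sub intervalIntegrable_const).mul_const _)
      · intro x hx
        have ht0 : (0:ℝ) ≤ (b - x) / (b - a) := by
          apply div_nonneg <;> linarith [hx.2]
        have hs0 : (0:ℝ) ≤ (x - a) / (b - a) := by
          apply div_nonneg <;> linarith [hx.1]
        have hne : b - a ≠ 0 := by linarith
        have hts : (b - x) / (b - a) + (x - a) / (b - a) = 1 := by
          rw [← add_div, show b - x + (x - a) = b - a by ring, div_self hne]
        have := hg.2 (left_mem_Icc.2 hab.le) (right_mem_Icc.2 hab.le) ht0 hs0 hts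
        simp only [smul_eq_mul] at this
        have hxeq : (b - x) / (b - a) * a + (x - a) / (b - a) * b = x := by
          rw [div_mul_eq_mul_div, div_mul_eq_mul_div, ← add_div,
            show (b - x) * a + (x - a) * b = x * (b - a) by ring,
            mul_div_assoc, div_self hne, mul_one]
        rw [hxeq] at this
        calc g x ≤ (b - x) / (b - a) * g a + (x - a) / (b - a) * g b := this
          _ = ((b - x) * g a + (x - a) * g b) / (b - a) := by ring
    have h2 : (∫ x in a..b, ((b - x) * g a + (x - a) * g b) / (b - a))
        = (b - a) * (g a + g b) / 2 := by
      have hid : IntervalIntegrable (fun x : ℝ => x) volume a b :=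
        intervalIntegral.intervalIntegrable_id
      rw [intervalIntegral.integral_div]
      rw [intervalIntegral.integral_add
        (((intervalIntegrable_const).sub hid).mul_const _)
        ((hid.sub intervalIntegrable_const).mul_const _)]
      rw [intervalIntegral.integral_mul_const, intervalIntegral.integral_mul_const,
        intervalIntegral.integral_sub intervalIntegrable_const hid,
        intervalIntegral.integral_sub hid intervalIntegrable_const,
        integral_id, intervalIntegral.integral_const, intervalIntegral.integral_const]
      have hne : b - a ≠ 0 := by linarith
      field_simp
      ring
    linarith [h1, h2.symm ▸ h1]

theorem hadamard_coordinates
    (a b c d : ℝ) (hab : a < b) (hcd : c < d) (f : ℝ → ℝ → ℝ)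
    (hint : IntegrableOn (fun p : ℝ × ℝ => f p.1 p.2)
      (Set.Icc a b ×ˢ Set.Icc c d) volume)
    (hfx : ∀ y ∈ Set.Icc c d, ConvexOn ℝ (Set.Icc a b) (fun x => f x y))
    (hfy : ∀ x ∈ Set.Icc a b, ConvexOn ℝ (Set.Icc c d) (fun y => f x y)) :
    f ((a + b) / 2) ((c + d) / 2) ≤
        (1 / ((b - a) * (d - c))) * ∫ x in a..b, ∫ y in c..d, f x y ∧
      (1 / ((b - a) * (d - c))) * (∫ x in a..b, ∫ y in c..d, f x y) ≤
        (f a c + f a d + f b c + f b d) / 4 := by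
  have hm1 : (a + b) / 2 ∈ Icc a b := ⟨by linarith, by linarith⟩
  have hm2 : (c + d) / 2 ∈ Icc c d := ⟨by linarith, by linarith⟩
  have hk : (0:ℝ) < (b - a) * (d - c) := mul_pos (by linarith) (by linarith)
  -- Fubini: integrability of inner integral
  have hG : IntegrableOn (fun x => ∫ y in c..d, f x y) (Icc a b) := by
    have h1 : Integrable (fun p : ℝ × ℝ => f p.1 p.2)
        ((volume.restrict (Icc a b)).prod (volume.restrict (Icc c d))) := by
      rwa [Measure.prod_restrict, ← Measure.volume_eq_prod]
    have h2 := h1.integral_prod_left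
    apply h2.congr
    filter_upwards with x
    rw [intervalIntegral.integral_of_le hcd.le, ← integral_Icc_eq_integral_Ioc]
  have hGi : IntervalIntegrable (fun x => ∫ y in c..d, f x y) volume a b := by
    rw [intervalIntegrable_iff_integrableOn_Icc_of_le hab.le]; exact hG
  -- per-x 1D inequalities in y
  have hyl : ∀ x ∈ Icc a b, (d - c) * f x ((c + d)/2) ≤ ∫ y in c..d, f x y :=
    fun x hx => (hh hcd (hfy x hx)).1
  have hyr : ∀ x ∈ Icc a b, (∫ y in c..d, f x y) ≤ (d - c) * (f x c + f x d) / 2 :=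
    fun x hx => (hh hcd (hfy x hx)).2
  constructor
  · -- left inequality
    have hcv : ConvexOn ℝ (Icc a b) (fun x => f x ((c + d)/2)) := hfx _ hm2
    have h1 : (b - a) * f ((a+b)/2) ((c+d)/2) ≤ ∫ x in a..b, f x ((c+d)/2) :=
      (hh hab hcv).1
    have hcvi : IntervalIntegrable (fun x => f x ((c+d)/2)) volume a b := by
      rw [intervalIntegrable_iff_integrableOn_Icc_of_le hab.le]
      exact integrableOn_of_convexOn hab hcv
    have h2 : (∫ x in a..b, (d - c) * f x ((c+d)/2)) ≤ ∫ x in a..b, ∫ y in c..d, f x y :=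
      intervalIntegral.integral_mono_on hab.le (hcvi.const_mul _) hGi hyl
    rw [intervalIntegral.integral_const_mul] at h2
    have key : (b - a) * (d - c) * f ((a+b)/2) ((c+d)/2) ≤ ∫ x in a..b, ∫ y in c..d, f x y := by
      calc (b - a) * (d - c) * f ((a+b)/2) ((c+d)/2)
          = (d - c) * ((b - a) * f ((a+b)/2) ((c+d)/2)) := by ring
        _ ≤ (d - c) * ∫ x in a..b, f x ((c+d)/2) := by
            apply mul_le_mul_of_nonneg_left h1 (by linarith)
        _ ≤ ∫ x in a..b, ∫ y in c..d, f x y := h2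
    rw [one_div, ← div_eq_inv_mul, le_div_iff₀ hk, mul_comm]
    exact key
  · -- right inequality
    have hc1 : ConvexOn ℝ (Icc a b) (fun x => f x c) := hfx c (left_mem_Icc.2 hcd.le)
    have hc2 : ConvexOn ℝ (Icc a b) (fun x => f x d) := hfx d (right_mem_Icc.2 hcd.le)
    have hc1i : IntervalIntegrable (fun x => f x c) volume a b := by
      rw [intervalIntegrable_iff_integrableOn_Icc_of_le hab.le]
      exact integrableOn_of_convexOn hab hc1
    have hc2i : IntervalIntegrable (fun x => f x d) volume a b := by
      rw [intervalIntegrable_iff_integrableOn_Icc_of_le hab.le]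
      exact integrableOn_of_convexOn hab hc2
    have h1 : (∫ x in a..b, ∫ y in c..d, f x y)
        ≤ ∫ x in a..b, (d - c) * (f x c + f x d) / 2 := by
      apply intervalIntegral.integral_mono_on hab.le hGi
        (((hc1i.add hc2i).const_mul _).div_const 2) hyr
    have h2 : (∫ x in a..b, (d - c) * (f x c + f x d) / 2)
        = (d - c) / 2 * ((∫ x in a..b, f x c) + ∫ x in a..b, f x d) := by
      rw [← intervalIntegral.integral_add hc1i hc2i, ← intervalIntegral.integral_const_mul]
      congr 1; ext x; ring
    have h3 : (∫ x in a..b, f x c) ≤ (b - a) * (f a c + f b c) / 2 := (hh hab hc1).2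
    have h4 : (∫ x in a..b, f x d) ≤ (b - a) * (f a d + f b d) / 2 := (hh hab hc2).2
    have key : (∫ x in a..b, ∫ y in c..d, f x y)
        ≤ (b - a) * (d - c) * ((f a c + f a d + f b c + f b d) / 4) := by
      have hdc2 : (0:ℝ) ≤ (d - c) / 2 := by linarith
      calc (∫ x in a..b, ∫ y in c..d, f x y)
          ≤ (d - c) / 2 * ((∫ x in a..b, f x c) + ∫ x in a..b, f x d) := h2 ▸ h1
        _ ≤ (d - c) / 2 * ((b - a) * (f a c + f b c) / 2 + (b - a) * (f a d + f b d) / 2) := by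
            apply mul_le_mul_of_nonneg_left (by linarith) hdc2
        _ = (b - a) * (d - c) * ((f a c + f a d + f b c + f b d) / 4) := by ring
    rw [one_div, ← div_eq_inv_mul, div_le_iff₀ hk]
    linarith [key]
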